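/- Under the same hypotheses as the previous statement, P[|S_φ| ≥ t_φ·δ and φ ≤ T] ≤ 2·exp(−2sδ²/B²). -/

import Mathlib

open MeasureTheory ProbabilityTheory

open Real

lemma hoeff_core (p : ℝ) (hp0 : 0 ≤ p) (hp1 : p ≤ 1) (h : ℝ) :
    Real.log (1 - p + p * Real.exp h) ≤ p * h + h ^ 2 / 8 := by
  have hd : ∀ x : ℝ, 0 < 1 - p + p * Real.exp x := by
    intro x
    rcases eq_or_lt_of_le hp0 with h0 | h0
    · simp [← h0]
    · nlinarith [Real.exp_pos x]
  set G : ℝ → ℝ := fun x => p * x + x ^ 2 / 8 - Real.log (1 - p + p * Real.exp x) with hG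
  set G1 : ℝ → ℝ := fun x => p + x / 4 - p * Real.exp x / (1 - p + p * Real.exp x) with hG1
  have hden : ∀ x : ℝ, HasDerivAt (fun y => 1 - p + p * Real.exp y) (p * Real.exp x) x := by
    intro x
    simpa using (((Real.hasDerivAt_exp x).const_mul p).const_add (1 - p))
  have hderivG : ∀ x, HasDerivAt G (G1 x) x := by
    intro x
    have hlog : HasDerivAt (fun y => Real.log (1 - p + p * Real.exp y))
        (p * Real.exp x / (1 - p + p * Real.exp x)) x := (hden x).log (hd x).ne'
    have h1 : HasDerivAt (fun y : ℝ => p * y + y ^ 2 / 8) (p + x / 4) x := by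
      have := ((hasDerivAt_id x).const_mul p).add ((hasDerivAt_pow 2 x).div_const 8)
      refine this.congr_deriv ?_
      norm_num
      ring
    exact h1.sub hlog
  have hderivG1 : ∀ x, HasDerivAt G1
      (1 / 4 - p * Real.exp x * (1 - p) / (1 - p + p * Real.exp x) ^ 2) x := by
    intro x
    have hnum : HasDerivAt (fun y => p * Real.exp y) (p * Real.exp x) x :=
      (Real.hasDerivAt_exp x).const_mul p
    have hq : HasDerivAt (fun y => p * Real.exp y / (1 - p + p * Real.exp y))
        ((p * Real.exp x * (1 - p + p * Real.exp x) - p * Real.exp x * (p * Real.exp x)) /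
          (1 - p + p * Real.exp x) ^ 2) x := hnum.div (hden x) (hd x).ne'
    have h2 : HasDerivAt (fun y : ℝ => p + y / 4) (1 / 4) x := by
      simpa using ((hasDerivAt_id x).div_const 4).const_add p
    have := h2.sub hq
    refine this.congr_deriv ?_
    have h3 : (1 - p + p * Real.exp x) ≠ 0 := (hd x).ne'
    field_simp
    ring
  have hG1mono : Monotone G1 := by
    apply monotone_of_deriv_nonneg (fun x => (hderivG1 x).differentiableAt)
    intro x
    rw [(hderivG1 x).deriv]
    have h1 : 0 < (1 - p + p * Real.exp x) ^ 2 := pow_pos (hd x) 2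
    rw [sub_nonneg, div_le_iff₀ h1]
    nlinarith [Real.exp_pos x, sq_nonneg (1 - p - p * Real.exp x)]
  have hG10 : G1 0 = 0 := by simp [hG1]
  have hG0 : G 0 = 0 := by simp [hG]
  have hGcont : Continuous G := (Differentiable.continuous fun x => (hderivG x).differentiableAt)
  have key : 0 ≤ G h := by
    rcases le_or_gt 0 h with hx | hx
    · have hmono : MonotoneOn G (Set.Ici 0) := by
        apply monotoneOn_of_deriv_nonneg (convex_Ici 0) hGcont.continuousOn
          (fun x _ => (hderivG x).differentiableAt.differentiableWithinAt)
        intro x hxi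
        rw [(hderivG x).deriv]
        rw [interior_Ici] at hxi
        calc (0:ℝ) = G1 0 := hG10.symm
          _ ≤ G1 x := hG1mono (le_of_lt hxi)
      have := hmono Set.self_mem_Ici (Set.mem_Ici.2 hx) hx
      linarith [hG0 ▸ this]
    · have hmono : AntitoneOn G (Set.Iic 0) := by
        apply antitoneOn_of_deriv_nonpos (convex_Iic 0) hGcont.continuousOn
          (fun x _ => (hderivG x).differentiableAt.differentiableWithinAt)
        intro x hxi
        rw [(hderivG x).deriv]
        rw [interior_Iic] at hxi
        calc G1 x ≤ G1 0 := hG1mono (le_of_lt hxi)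
          _ = 0 := hG10
      have := hmono (Set.mem_Iic.2 hx.le) Set.self_mem_Iic hx.le
      linarith [hG0 ▸ this]
  rw [hG] at key
  simp only [] at key
  linarith [key]

lemma integrable_of_bdd {Ω : Type*} {mΩ : MeasurableSpace Ω} {P : Measure Ω} [IsFiniteMeasure P]
    {f : Ω → ℝ} (hm : AEStronglyMeasurable f P) {c : ℝ} (h : ∀ ω, |f ω| ≤ c) :
    Integrable f P :=
  ⟨hm, HasFiniteIntegral.of_bounded (C := c) (ae_of_all _ (fun ω => by
    simpa [Real.norm_eq_abs] using h ω))⟩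

lemma hoeffding_lemma {Ω : Type*} {mΩ : MeasurableSpace Ω} (P : Measure Ω) [IsProbabilityMeasure P]
    {B : ℝ} (hB : 0 < B) {X : Ω → ℝ} (hXm : Measurable X) (hXb : ∀ ω, X ω ∈ Set.Icc 0 B)
    (l : ℝ) :
    ∫ ω, Real.exp (l * (X ω - ∫ x, X x ∂P)) ∂P ≤ Real.exp (l ^ 2 * B ^ 2 / 8) := by
  set m := ∫ x, X x ∂P with hm
  have habs : ∀ ω, |X ω| ≤ B := fun ω => abs_le.2 ⟨by linarith [(hXb ω).1], (hXb ω).2⟩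
  have hXint : Integrable X P := integrable_of_bdd hXm.aestronglyMeasurable habs
  have hm0 : 0 ≤ m := integral_nonneg fun ω => (hXb ω).1
  have hmB : m ≤ B := by
    have := integral_mono hXint (integrable_const B) (fun ω => (hXb ω).2)
    simpa using this
  have hpt : ∀ ω, Real.exp (l * X ω) ≤ 1 + X ω * ((Real.exp (l * B) - 1) / B) := by
    intro ω
    have h0 : 0 ≤ X ω / B := div_nonneg (hXb ω).1 hB.le
    have h1 : X ω / B ≤ 1 := (div_le_one hB).2 (hXb ω).2
    have hc := convexOn_exp.2 (Set.mem_univ (0:ℝ)) (Set.mem_univ (l * B))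
      (by linarith : (0:ℝ) ≤ 1 - X ω / B) h0 (by ring)
    have he : (1 - X ω / B) • (0:ℝ) + (X ω / B) • (l * B) = l * X ω := by
      simp only [smul_eq_mul]; field_simp
      ring
    rw [he] at hc
    calc Real.exp (l * X ω) ≤ (1 - X ω / B) • Real.exp 0 + (X ω / B) • Real.exp (l * B) := hc
      _ = 1 + X ω * ((Real.exp (l * B) - 1) / B) := by
          simp only [smul_eq_mul, Real.exp_zero]
          field_simp
          ring
  have hexpint : Integrable (fun ω => Real.exp (l * X ω)) P := by
    apply integrable_of_bdd (c := Real.exp (|l| * B))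
    · exact (hXm.const_mul l).exp.aestronglyMeasurable
    · intro ω
      rw [abs_of_pos (Real.exp_pos _)]
      apply Real.exp_le_exp.2
      calc l * X ω ≤ |l * X ω| := le_abs_self _
        _ = |l| * |X ω| := abs_mul _ _
        _ ≤ |l| * B := by
            apply mul_le_mul_of_nonneg_left (habs ω) (abs_nonneg l)
  have hrhsint : Integrable (fun ω => 1 + X ω * ((Real.exp (l * B) - 1) / B)) P :=
    (integrable_const 1).add (hXint.mul_const _)
  have step1 : ∫ ω, Real.exp (l * X ω) ∂P ≤ 1 + m * ((Real.exp (l * B) - 1) / B) := by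
    calc ∫ ω, Real.exp (l * X ω) ∂P
        ≤ ∫ ω, (1 + X ω * ((Real.exp (l * B) - 1) / B)) ∂P :=
          integral_mono hexpint hrhsint hpt
      _ = 1 + m * ((Real.exp (l * B) - 1) / B) := by
          rw [integral_add (integrable_const 1) (hXint.mul_const _), integral_const,
            integral_mul_const]
          simp [hm]
  set p := m / B with hp
  have hp0 : 0 ≤ p := div_nonneg hm0 hB.le
  have hp1 : p ≤ 1 := (div_le_one hB).2 hmB
  have hval : 1 + m * ((Real.exp (l * B) - 1) / B) = 1 - p + p * Real.exp (l * B) := by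
    rw [hp]; field_simp; ring
  have hdpos : 0 < 1 - p + p * Real.exp (l * B) := by
    rcases eq_or_lt_of_le hp0 with h0 | h0
    · simp [← h0]
    · nlinarith [Real.exp_pos (l * B)]
  calc ∫ ω, Real.exp (l * (X ω - m)) ∂P
      = Real.exp (-(l * m)) * ∫ ω, Real.exp (l * X ω) ∂P := by
        rw [← integral_const_mul]
        congr 1 with ω
        rw [← Real.exp_add]
        ring_nf
    _ ≤ Real.exp (-(l * m)) * (1 - p + p * Real.exp (l * B)) := by
        rw [← hval]
        exact mul_le_mul_of_nonneg_left step1 (Real.exp_pos _).le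
    _ = Real.exp (-(l * m) + Real.log (1 - p + p * Real.exp (l * B))) := by
        rw [Real.exp_add, Real.exp_log hdpos]
    _ ≤ Real.exp (-(l * m) + (p * (l * B) + (l * B) ^ 2 / 8)) :=
        Real.exp_le_exp.2 (by linarith [hoeff_core p hp0 hp1 (l * B)])
    _ = Real.exp (l ^ 2 * B ^ 2 / 8) := by
        congr 1
        have : p * B = m := by rw [hp]; field_simp
        linear_combination l * this

lemma indep_natural {Ω : Type*} {mΩ : MeasurableSpace Ω} (P : Measure Ω)
    (Z : ℤ → Ω → ℝ) (hZm : ∀ t, StronglyMeasurable (Z t))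
    (hindep : iIndepFun Z P) (n : ℤ) {f : Ω → ℝ}
    (hf : Measurable[(MeasureTheory.Filtration.natural Z hZm) n] f) :
    IndepFun f (Z (n + 1)) P := by
  have h_le : ∀ t : ℤ, MeasurableSpace.comap (Z t) inferInstance ≤ mΩ :=
    fun t => (hZm t).measurable.comap_le
  have h1 : Indep (⨆ j ∈ Set.Iic n, MeasurableSpace.comap (Z j) inferInstance)
      (⨆ j ∈ (Set.Iic n)ᶜ, MeasurableSpace.comap (Z j) inferInstance) P :=
    indep_biSup_compl h_le hindep.iIndep (Set.Iic n)
  have h2 : ((MeasureTheory.Filtration.natural Z hZm) n : MeasurableSpace Ω)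
      ≤ ⨆ j ∈ Set.Iic n, MeasurableSpace.comap (Z j) inferInstance := by
    show (⨆ j ≤ n, MeasurableSpace.comap (Z j) inferInstance) ≤ _
    exact le_of_eq (by rfl)
  have h3 : MeasurableSpace.comap (Z (n + 1)) inferInstance
      ≤ ⨆ j ∈ (Set.Iic n)ᶜ, MeasurableSpace.comap (Z j) inferInstance :=
    le_biSup (f := fun j : ℤ => MeasurableSpace.comap (Z j) inferInstance) (by simp : (n + 1) ∈ (Set.Iic n)ᶜ)
  have h4 : Indep ((MeasureTheory.Filtration.natural Z hZm) n)
      (MeasurableSpace.comap (Z (n + 1)) inferInstance) P :=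
    indep_of_indep_of_le_right (indep_of_indep_of_le_left h1 h2) h3
  rw [IndepFun_iff_Indep]
  exact indep_of_indep_of_le_left h4 hf.comap_le

lemma mgf_sum_le {Ω : Type*} {mΩ : MeasurableSpace Ω} (P : Measure Ω) [IsProbabilityMeasure P]
    {B : ℝ} (hB : 0 < B) (n₀ : ℤ)
    (Z : ℤ → Ω → ℝ) (hZm : ∀ t, StronglyMeasurable (Z t))
    (hZb : ∀ t ω, Z t ω ∈ Set.Icc 0 B)
    (hindep : iIndepFun Z P)
    (C : ℤ → Ω → ℝ) (hC01 : ∀ t ω, C t ω = 0 ∨ C t ω = 1)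
    (hCm : ∀ t, Measurable[(MeasureTheory.Filtration.natural Z hZm) (t - 1)] (C t))
    (l : ℝ) :
    ∀ n : ℤ, n₀ - 1 ≤ n →
      ∫ ω, Real.exp (∑ t ∈ Finset.Icc n₀ n,
        (l * (C t ω * (Z t ω - ∫ x, Z t x ∂P)) - l ^ 2 * B ^ 2 / 8 * C t ω)) ∂P ≤ 1 := by
  set F := MeasureTheory.Filtration.natural Z hZm with hF
  set K := l ^ 2 * B ^ 2 / 8 with hK
  have hK0 : 0 ≤ K := by positivity
  set μZ : ℤ → ℝ := fun t => ∫ x, Z t x ∂P with hμZ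
  set term : ℤ → Ω → ℝ := fun t ω => l * (C t ω * (Z t ω - μZ t)) - K * C t ω with hterm
  have hZmeas : ∀ t, Measurable (Z t) := fun t => (hZm t).measurable
  have hCmeas : ∀ t, Measurable (C t) := fun t => (hCm t).mono (F.le (t - 1)) le_rfl
  have hμZb : ∀ t, μZ t ∈ Set.Icc (0:ℝ) B := by
    intro t
    constructor
    · exact integral_nonneg fun ω => (hZb t ω).1
    · have := integral_mono (integrable_of_bdd (P := P) (hZmeas t).aestronglyMeasurable
        (c := B) (fun ω => abs_le.2 ⟨by linarith [(hZb t ω).1], (hZb t ω).2⟩))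
        (integrable_const B) (fun ω => (hZb t ω).2)
      simpa using this
  have hCabs : ∀ t ω, |C t ω| ≤ 1 := by
    intro t ω; rcases hC01 t ω with h | h <;> rw [h] <;> norm_num
  have hZsub : ∀ t ω, |Z t ω - μZ t| ≤ B := fun t ω =>
    abs_le.2 ⟨by linarith [(hZb t ω).1, (hμZb t).2], by linarith [(hZb t ω).2, (hμZb t).1]⟩
  have htermb : ∀ t ω, |term t ω| ≤ |l| * B + K := by
    intro t ω
    rcases hC01 t ω with h | h
    · simp only [hterm, h]
      simp
      positivity
    · simp only [hterm, h, mul_one, one_mul]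
      calc |l * (Z t ω - μZ t) - K| ≤ |l * (Z t ω - μZ t)| + |K| := abs_sub _ _
        _ ≤ |l| * B + K := by
            rw [abs_mul, abs_of_nonneg hK0]
            have := hZsub t ω
            have hl := abs_nonneg l
            nlinarith [abs_nonneg (Z t ω - μZ t)]
  have htermmeas : ∀ t, Measurable (term t) := by
    intro t
    exact (((hCmeas t).mul ((hZmeas t).sub_const _)).const_mul l).sub ((hCmeas t).const_mul K)
  -- the exp of partial sums, their measurability and boundedness
  have hsummeas : ∀ n : ℤ, Measurable fun ω => ∑ t ∈ Finset.Icc n₀ n, term t ω :=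
    fun n => Finset.measurable_sum _ fun t _ => htermmeas t
  have hsumb : ∀ n : ℤ, ∀ ω, |∑ t ∈ Finset.Icc n₀ n, term t ω|
      ≤ (Finset.Icc n₀ n).card * (|l| * B + K) := by
    intro n ω
    calc |∑ t ∈ Finset.Icc n₀ n, term t ω| ≤ ∑ t ∈ Finset.Icc n₀ n, |term t ω| :=
        Finset.abs_sum_le_sum_abs _ _
      _ ≤ ∑ _t ∈ Finset.Icc n₀ n, (|l| * B + K) := Finset.sum_le_sum fun t _ => htermb t ω
      _ = (Finset.Icc n₀ n).card * (|l| * B + K) := by rw [Finset.sum_const, nsmul_eq_mul]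
  have hGint : ∀ n : ℤ, Integrable (fun ω => Real.exp (∑ t ∈ Finset.Icc n₀ n, term t ω)) P := by
    intro n
    apply integrable_of_bdd ((hsummeas n).exp).aestronglyMeasurable
      (c := Real.exp ((Finset.Icc n₀ n).card * (|l| * B + K)))
    intro ω
    rw [abs_of_pos (Real.exp_pos _)]
    exact Real.exp_le_exp.2 (le_trans (le_abs_self _) (hsumb n ω))
  refine Int.le_induction ?_ ?_
  · rw [Finset.Icc_eq_empty (by omega : ¬ n₀ ≤ n₀ - 1)]
    simp
  · intro n hn ih
    have hsplit : Finset.Icc n₀ (n + 1) = insert (n + 1) (Finset.Icc n₀ n) := by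
      ext t
      simp only [Finset.mem_Icc, Finset.mem_insert]
      omega
    have hnotmem : (n + 1) ∉ Finset.Icc n₀ n := by
      simp only [Finset.mem_Icc]
      omega
    set G : Ω → ℝ := fun ω => Real.exp (∑ t ∈ Finset.Icc n₀ n, term t ω) with hG
    set I : Ω → ℝ := fun ω => if C (n + 1) ω = 1 then 1 else 0 with hI
    set h : ℝ → ℝ := fun x => Real.exp (l * (x - μZ (n + 1))) with hh
    have hGpos : ∀ ω, 0 < G ω := fun ω => Real.exp_pos _
    have hI01 : ∀ ω, I ω = 0 ∨ I ω = 1 := by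
      intro ω
      by_cases hc : C (n + 1) ω = 1 <;> simp [hI, hc]
    have hptwise : ∀ ω, Real.exp (∑ t ∈ Finset.Icc n₀ (n + 1), term t ω)
        = G ω * (1 - I ω) + Real.exp (-K) * ((G ω * I ω) * h (Z (n + 1) ω)) := by
      intro ω
      rw [hsplit, Finset.sum_insert hnotmem, Real.exp_add]
      rcases hC01 (n + 1) ω with hc | hc
      · have h0 : term (n + 1) ω = 0 := by simp [hterm, hc]
        have hIω : I ω = 0 := by norm_num [hI, hc]
        rw [h0, hIω, Real.exp_zero]
        ring
      · have h1 : term (n + 1) ω = l * (Z (n + 1) ω - μZ (n + 1)) + (-K) := by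
          simp [hterm, hc]; ring
        have hIω : I ω = 1 := by simp [hI, hc]
        rw [h1, hIω, Real.exp_add]
        simp only [hh]
        ring
    -- measurability
    have hGmeas : Measurable G := (hsummeas n).exp
    have hImeas : Measurable I :=
      Measurable.ite (hCmeas (n + 1) (measurableSet_singleton 1)) measurable_const
        measurable_const
    have hhζmeas : Measurable fun ω => h (Z (n + 1) ω) :=
      (((hZmeas (n + 1)).sub_const _).const_mul l).exp
    -- bounds and integrability
    set Gb : ℝ := Real.exp ((Finset.Icc n₀ n).card * (|l| * B + K)) with hGb
    have hGbd : ∀ ω, |G ω| ≤ Gb := by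
      intro ω
      rw [abs_of_pos (hGpos ω)]
      exact Real.exp_le_exp.2 (le_trans (le_abs_self _) (hsumb n ω))
    have hIabs : ∀ ω, |I ω| ≤ 1 := by
      intro ω; rcases hI01 ω with h' | h' <;> rw [h'] <;> norm_num
    have hhbd : ∀ ω, |h (Z (n + 1) ω)| ≤ Real.exp (|l| * B) := by
      intro ω
      rw [abs_of_pos (Real.exp_pos _)]
      apply Real.exp_le_exp.2
      calc l * (Z (n + 1) ω - μZ (n + 1)) ≤ |l * (Z (n + 1) ω - μZ (n + 1))| := le_abs_self _
        _ = |l| * |Z (n + 1) ω - μZ (n + 1)| := abs_mul _ _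
        _ ≤ |l| * B := mul_le_mul_of_nonneg_left (hZsub (n + 1) ω) (abs_nonneg l)
    have int1 : Integrable (fun ω => G ω * (1 - I ω)) P := by
      apply integrable_of_bdd (P := P) (hGmeas.mul (measurable_const.sub hImeas)).aestronglyMeasurable
        (c := Gb * 2)
      intro ω
      rw [Pi.mul_apply, Pi.sub_apply, abs_mul]
      apply mul_le_mul (hGbd ω) _ (abs_nonneg _) ((abs_nonneg _).trans (hGbd ω))
      calc |1 - I ω| ≤ |(1:ℝ)| + |I ω| := abs_sub _ _
        _ ≤ 2 := by rw [abs_one]; linarith [hIabs ω]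
    have int2 : Integrable (fun ω => G ω * I ω) P := by
      apply integrable_of_bdd (P := P) (hGmeas.mul hImeas).aestronglyMeasurable (c := Gb * 1)
      intro ω
      rw [Pi.mul_apply, abs_mul]
      exact mul_le_mul (hGbd ω) (hIabs ω) (abs_nonneg _) ((abs_nonneg _).trans (hGbd ω))
    have int4 : Integrable (fun ω => G ω * I ω * h (Z (n + 1) ω)) P := by
      apply integrable_of_bdd (P := P)
        ((hGmeas.mul hImeas).mul hhζmeas).aestronglyMeasurable (c := Gb * 1 * Real.exp (|l| * B))
      intro ω
      rw [Pi.mul_apply, Pi.mul_apply, abs_mul]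
      apply mul_le_mul _ (hhbd ω) (abs_nonneg _) _
      · rw [abs_mul]
        exact mul_le_mul (hGbd ω) (hIabs ω) (abs_nonneg _) ((abs_nonneg _).trans (hGbd ω))
      · positivity
    -- measurability w.r.t. the filtration at time n, and independence
    have hGImeasF : Measurable[F n] fun ω => G ω * I ω := by
      have hsumF : Measurable[F n] fun ω => ∑ t ∈ Finset.Icc n₀ n, term t ω := by
        apply Finset.measurable_sum
        intro t ht
        rw [Finset.mem_Icc] at ht
        have hC' : Measurable[F n] (C t) :=
          (hCm t).mono (F.mono (by omega : t - 1 ≤ n)) le_rfl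
        have hZ' : Measurable[F n] (Z t) :=
          ((MeasureTheory.Filtration.stronglyAdapted_natural hZm t).measurable).mono
            (F.mono ht.2) le_rfl
        exact ((hC'.mul (hZ'.sub_const _)).const_mul l).sub (hC'.const_mul K)
      have hGF : Measurable[F n] G := hsumF.exp
      have hCF : Measurable[F n] (C (n + 1)) := by
        have := hCm (n + 1)
        have he : (n : ℤ) + 1 - 1 = n := by ring
        rwa [he] at this
      have hIF : Measurable[F n] I :=
        Measurable.ite (hCF (measurableSet_singleton 1)) measurable_const measurable_const
      exact hGF.mul hIF
    have hindepGI : IndepFun (fun ω => G ω * I ω) (Z (n + 1)) P :=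
      indep_natural P Z hZm hindep n hGImeasF
    have hindep2 : IndepFun (fun ω => G ω * I ω) (fun ω => h (Z (n + 1) ω)) P := by
      have := hindepGI.comp measurable_id
        (((measurable_id.sub_const (μZ (n + 1))).const_mul l).exp)
      exact this
    have hmul : ∫ ω, G ω * I ω * h (Z (n + 1) ω) ∂P
        = (∫ ω, G ω * I ω ∂P) * ∫ ω, h (Z (n + 1) ω) ∂P := by
      have := IndepFun.integral_fun_mul_eq_mul_integral hindep2 (hGmeas.mul hImeas).aestronglyMeasurable
        hhζmeas.aestronglyMeasurable
      exact this
    have hHoeff : ∫ ω, h (Z (n + 1) ω) ∂P ≤ Real.exp K :=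
      hoeffding_lemma P hB (hZmeas (n + 1)) (fun ω => hZb (n + 1) ω) l
    have hGInn : 0 ≤ ∫ ω, G ω * I ω ∂P := by
      apply integral_nonneg
      intro ω
      simp only [Pi.zero_apply]
      rcases hI01 ω with h' | h' <;> rw [h']
      · simp
      · simpa using (hGpos ω).le
    calc ∫ ω, Real.exp (∑ t ∈ Finset.Icc n₀ (n + 1), term t ω) ∂P
        = ∫ ω, (G ω * (1 - I ω) + Real.exp (-K) * (G ω * I ω * h (Z (n + 1) ω))) ∂P :=
          integral_congr_ae (ae_of_all _ hptwise)
      _ = (∫ ω, G ω * (1 - I ω) ∂P)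
            + Real.exp (-K) * ∫ ω, G ω * I ω * h (Z (n + 1) ω) ∂P := by
          rw [integral_add int1 (int4.const_mul _), integral_const_mul]
      _ ≤ (∫ ω, G ω * (1 - I ω) ∂P) + Real.exp (-K) * ((∫ ω, G ω * I ω ∂P) * Real.exp K) := by
          rw [hmul]
          have := mul_le_mul_of_nonneg_left hHoeff hGInn
          nlinarith [Real.exp_pos (-K), mul_le_mul_of_nonneg_left this (Real.exp_pos (-K)).le]
      _ = (∫ ω, G ω * (1 - I ω) ∂P) + ∫ ω, G ω * I ω ∂P := by
          rw [Real.exp_neg]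
          field_simp
      _ = ∫ ω, G ω ∂P := by
          rw [← integral_add int1 int2]
          apply integral_congr_ae (ae_of_all _ _)
          intro ω
          ring
      _ ≤ 1 := ih

lemma tail_le {Ω : Type*} {mΩ : MeasurableSpace Ω} (P : Measure Ω) [IsProbabilityMeasure P]
    {B : ℝ} (hB : 0 < B) (n₀ T : ℤ) (hT : n₀ ≤ T) (s : ℕ) {δ : ℝ} (hδ : 0 < δ)
    (Z : ℤ → Ω → ℝ) (hZm : ∀ t, StronglyMeasurable (Z t))
    (hZb : ∀ t ω, Z t ω ∈ Set.Icc 0 B)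
    (hindep : iIndepFun Z P)
    (C : ℤ → Ω → ℝ) (hC01 : ∀ t ω, C t ω = 0 ∨ C t ω = 1)
    (hCm : ∀ t, Measurable[(MeasureTheory.Filtration.natural Z hZm) (t - 1)] (C t))
    (σ : ℝ) (hσ : σ = 1 ∨ σ = -1) :
    P {ω | (s : ℝ) ≤ ∑ t ∈ Finset.Icc n₀ T, C t ω ∧
        (∑ t ∈ Finset.Icc n₀ T, C t ω) * δ
          ≤ σ * ∑ t ∈ Finset.Icc n₀ T, C t ω * (Z t ω - ∫ x, Z t x ∂P)}
      ≤ ENNReal.ofReal (Real.exp (-2 * (s : ℝ) * δ ^ 2 / B ^ 2)) := by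
  set μZ : ℤ → ℝ := fun t => ∫ x, Z t x ∂P with hμZ
  set l : ℝ := σ * (4 * δ / B ^ 2) with hl
  have hσ2 : σ ^ 2 = 1 := by rcases hσ with h | h <;> rw [h] <;> norm_num
  have hK : l ^ 2 * B ^ 2 / 8 = 2 * δ ^ 2 / B ^ 2 := by
    rw [hl, mul_pow, hσ2]
    field_simp
    ring
  set K : ℝ := l ^ 2 * B ^ 2 / 8 with hKdef
  have hK0 : 0 ≤ K := by positivity
  set f : Ω → ℝ := fun ω => Real.exp (∑ t ∈ Finset.Icc n₀ T,
    (l * (C t ω * (Z t ω - μZ t)) - K * C t ω)) with hf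
  have hint1 : ∫ ω, f ω ∂P ≤ 1 :=
    mgf_sum_le P hB n₀ Z hZm hZb hindep C hC01 hCm l T (by omega)
  -- integrability of f
  have hZmeas : ∀ t, Measurable (Z t) := fun t => (hZm t).measurable
  have hCmeas : ∀ t, Measurable (C t) :=
    fun t => (hCm t).mono ((MeasureTheory.Filtration.natural Z hZm).le (t - 1)) le_rfl
  have hμZb : ∀ t, μZ t ∈ Set.Icc (0 : ℝ) B := by
    intro t
    constructor
    · exact integral_nonneg fun ω => (hZb t ω).1
    · have := integral_mono (integrable_of_bdd (P := P) (hZmeas t).aestronglyMeasurable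
        (c := B) (fun ω => abs_le.2 ⟨by linarith [(hZb t ω).1], (hZb t ω).2⟩))
        (integrable_const B) (fun ω => (hZb t ω).2)
      simpa using this
  have hZsub : ∀ t ω, |Z t ω - μZ t| ≤ B := fun t ω =>
    abs_le.2 ⟨by linarith [(hZb t ω).1, (hμZb t).2], by linarith [(hZb t ω).2, (hμZb t).1]⟩
  have htermb : ∀ t ω, |l * (C t ω * (Z t ω - μZ t)) - K * C t ω| ≤ |l| * B + K := by
    intro t ω
    rcases hC01 t ω with h | h
    · rw [h]
      simp
      positivity
    · rw [h]
      calc |l * (1 * (Z t ω - μZ t)) - K * 1| ≤ |l * (1 * (Z t ω - μZ t))| + |K * 1| :=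
          abs_sub _ _
        _ ≤ |l| * B + K := by
            rw [mul_one, one_mul, abs_mul, abs_of_nonneg hK0]
            have := hZsub t ω
            have hl0 := abs_nonneg l
            nlinarith [abs_nonneg (Z t ω - μZ t)]
  have hfmeas : Measurable f := by
    apply Measurable.exp
    apply Finset.measurable_sum
    intro t _
    exact (((hCmeas t).mul ((hZmeas t).sub_const _)).const_mul l).sub ((hCmeas t).const_mul K)
  have hfint : Integrable f P := by
    apply integrable_of_bdd (P := P) hfmeas.aestronglyMeasurable
      (c := Real.exp ((Finset.Icc n₀ T).card * (|l| * B + K)))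
    intro ω
    rw [hf, abs_of_pos (Real.exp_pos _)]
    apply Real.exp_le_exp.2
    calc ∑ t ∈ Finset.Icc n₀ T, (l * (C t ω * (Z t ω - μZ t)) - K * C t ω)
        ≤ |∑ t ∈ Finset.Icc n₀ T, (l * (C t ω * (Z t ω - μZ t)) - K * C t ω)| := le_abs_self _
      _ ≤ ∑ t ∈ Finset.Icc n₀ T, |l * (C t ω * (Z t ω - μZ t)) - K * C t ω| :=
          Finset.abs_sum_le_sum_abs _ _
      _ ≤ ∑ _t ∈ Finset.Icc n₀ T, (|l| * B + K) := Finset.sum_le_sum fun t _ => htermb t ω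
      _ = (Finset.Icc n₀ T).card * (|l| * B + K) := by rw [Finset.sum_const, nsmul_eq_mul]
  -- the event is contained in a level set of f
  set c0 : ℝ := 2 * (s : ℝ) * δ ^ 2 / B ^ 2 with hc0
  have hsub : {ω | (s : ℝ) ≤ ∑ t ∈ Finset.Icc n₀ T, C t ω ∧
      (∑ t ∈ Finset.Icc n₀ T, C t ω) * δ ≤ σ * ∑ t ∈ Finset.Icc n₀ T, C t ω * (Z t ω - μZ t)}
      ⊆ {ω | Real.exp c0 ≤ f ω} := by
    intro ω hω
    obtain ⟨h1, h2⟩ := hω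
    have hSc0 : (0:ℝ) ≤ ∑ t ∈ Finset.Icc n₀ T, C t ω := le_trans (Nat.cast_nonneg s) h1
    rw [Set.mem_setOf_eq, hf]
    apply Real.exp_le_exp.2
    have hsum : ∑ t ∈ Finset.Icc n₀ T, (l * (C t ω * (Z t ω - μZ t)) - K * C t ω)
        = l * (∑ t ∈ Finset.Icc n₀ T, C t ω * (Z t ω - μZ t))
          - K * ∑ t ∈ Finset.Icc n₀ T, C t ω := by
      rw [Finset.sum_sub_distrib, Finset.mul_sum, Finset.mul_sum]
    rw [hsum]
    set Sc := ∑ t ∈ Finset.Icc n₀ T, C t ω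
    set Sz := ∑ t ∈ Finset.Icc n₀ T, C t ω * (Z t ω - μZ t)
    have hlSz : l * Sz = (4 * δ / B ^ 2) * (σ * Sz) := by rw [hl]; ring
    have step : (4 * δ / B ^ 2) * (Sc * δ) ≤ (4 * δ / B ^ 2) * (σ * Sz) :=
      mul_le_mul_of_nonneg_left h2 (by positivity)
    rw [hlSz, hc0, hK]
    have hmain : 2 * (s : ℝ) * δ ^ 2 ≤ 4 * δ * (σ * Sz) - 2 * δ ^ 2 * Sc := by
      nlinarith [mul_le_mul_of_nonneg_left h2 (by positivity : (0:ℝ) ≤ 4 * δ),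
        mul_le_mul_of_nonneg_left h1 (by positivity : (0:ℝ) ≤ 2 * δ ^ 2)]
    have hrw : 4 * δ / B ^ 2 * (σ * Sz) - 2 * δ ^ 2 / B ^ 2 * Sc
        = (4 * δ * (σ * Sz) - 2 * δ ^ 2 * Sc) / B ^ 2 := by ring
    rw [hrw]
    gcongr
  -- Markov
  have hMarkov : Real.exp c0 * (P {ω | Real.exp c0 ≤ f ω}).toReal ≤ 1 :=
    le_trans (mul_meas_ge_le_integral_of_nonneg
      (ae_of_all _ fun ω => (Real.exp_pos _).le) hfint _) hint1
  have hPA : (P {ω | Real.exp c0 ≤ f ω}).toReal ≤ Real.exp (-c0) := by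
    calc (P {ω | Real.exp c0 ≤ f ω}).toReal
        = (Real.exp c0)⁻¹ * (Real.exp c0 * (P {ω | Real.exp c0 ≤ f ω}).toReal) := by
          field_simp
      _ ≤ (Real.exp c0)⁻¹ * 1 :=
          mul_le_mul_of_nonneg_left hMarkov (inv_nonneg.2 (Real.exp_pos _).le)
      _ = Real.exp (-c0) := by rw [mul_one, Real.exp_neg]
  calc P {ω | (s : ℝ) ≤ ∑ t ∈ Finset.Icc n₀ T, C t ω ∧
      (∑ t ∈ Finset.Icc n₀ T, C t ω) * δ ≤ σ * ∑ t ∈ Finset.Icc n₀ T, C t ω * (Z t ω - μZ t)}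
      ≤ P {ω | Real.exp c0 ≤ f ω} := measure_mono hsub
    _ = ENNReal.ofReal ((P {ω | Real.exp c0 ≤ f ω}).toReal) :=
        (ENNReal.ofReal_toReal (measure_ne_top _ _)).symm
    _ ≤ ENNReal.ofReal (Real.exp (-2 * (s : ℝ) * δ ^ 2 / B ^ 2)) := by
        apply ENNReal.ofReal_le_ofReal
        have : -2 * (s : ℝ) * δ ^ 2 / B ^ 2 = -c0 := by rw [hc0]; ring
        rw [this]
        exact hPA

theorem stmt_5 {Ω : Type*} {mΩ : MeasurableSpace Ω} (P : Measure Ω) [IsProbabilityMeasure P]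
    (B : ℝ) (hB : 0 < B) (n₀ T : ℤ) (hT : n₀ ≤ T) (s : ℕ) (δ : ℝ) (hδ : 0 < δ)
    (Z : ℤ → Ω → ℝ) (hZm : ∀ t, StronglyMeasurable (Z t))
    (hZb : ∀ t ω, Z t ω ∈ Set.Icc 0 B)
    (hindep : iIndepFun Z P)
    (Bsel : ℤ → Ω → ℝ) (hB01 : ∀ t ω, Bsel t ω = 0 ∨ Bsel t ω = 1)
    (hBm : ∀ t, Measurable[(MeasureTheory.Filtration.natural Z hZm) (t - 1)] (Bsel t))
    (φ : Ω → ℤ) (hφ : IsStoppingTime (MeasureTheory.Filtration.natural Z hZm) (fun ω => (φ ω : WithTop ℤ)))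
    (hφr : ∀ ω, φ ω ∈ Set.Icc n₀ (T + 1))
    (hφs : ∀ ω, φ ω ≤ T → (s : ℝ) ≤ ∑ t ∈ Finset.Icc n₀ (φ ω), Bsel t ω) :
    P {ω | (∑ t ∈ Finset.Icc n₀ (φ ω), Bsel t ω) * δ ≤
            |∑ t ∈ Finset.Icc n₀ (φ ω), Bsel t ω * (Z t ω - ∫ x, Z t x ∂P)| ∧
          φ ω ≤ T}
      ≤ ENNReal.ofReal (2 * Real.exp (-2 * (s : ℝ) * δ ^ 2 / B ^ 2)) := by
  set μZ : ℤ → ℝ := fun t => ∫ x, Z t x ∂P with hμZ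
  set C : ℤ → Ω → ℝ := fun t ω => if φ ω ≤ t - 1 then 0 else Bsel t ω with hC
  have hC01 : ∀ t ω, C t ω = 0 ∨ C t ω = 1 := by
    intro t ω
    by_cases h : φ ω ≤ t - 1
    · left; simp only [hC, h, ↓reduceIte]
    · simpa only [hC, h, ↓reduceIte] using hB01 t ω
  have hCm : ∀ t, Measurable[(MeasureTheory.Filtration.natural Z hZm) (t - 1)] (C t) :=
    fun t => Measurable.ite (by have := hφ (t - 1); simp only [WithTop.coe_le_coe] at this; exact this) measurable_const (hBm t)
  have hsub : {ω | (∑ t ∈ Finset.Icc n₀ (φ ω), Bsel t ω) * δ ≤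
        |∑ t ∈ Finset.Icc n₀ (φ ω), Bsel t ω * (Z t ω - μZ t)| ∧ φ ω ≤ T}
      ⊆ {ω | (s : ℝ) ≤ ∑ t ∈ Finset.Icc n₀ T, C t ω ∧
            (∑ t ∈ Finset.Icc n₀ T, C t ω) * δ
              ≤ (1 : ℝ) * ∑ t ∈ Finset.Icc n₀ T, C t ω * (Z t ω - μZ t)}
        ∪ {ω | (s : ℝ) ≤ ∑ t ∈ Finset.Icc n₀ T, C t ω ∧
            (∑ t ∈ Finset.Icc n₀ T, C t ω) * δ
              ≤ (-1 : ℝ) * ∑ t ∈ Finset.Icc n₀ T, C t ω * (Z t ω - μZ t)} := by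
    intro ω hω
    obtain ⟨habs, hφT⟩ := hω
    have heq : ∀ g : ℤ → ℝ, ∑ t ∈ Finset.Icc n₀ T, C t ω * g t
        = ∑ t ∈ Finset.Icc n₀ (φ ω), Bsel t ω * g t := by
      intro g
      have e1 : ∑ t ∈ Finset.Icc n₀ (φ ω), C t ω * g t
          = ∑ t ∈ Finset.Icc n₀ T, C t ω * g t := by
        apply Finset.sum_subset (Finset.Icc_subset_Icc_right hφT)
        intro t ht hts
        rw [Finset.mem_Icc] at ht
        rw [Finset.mem_Icc] at hts
        have h' : φ ω ≤ t - 1 := by omega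
        simp only [hC, h', ↓reduceIte, zero_mul]
      have e2 : ∑ t ∈ Finset.Icc n₀ (φ ω), C t ω * g t
          = ∑ t ∈ Finset.Icc n₀ (φ ω), Bsel t ω * g t := by
        apply Finset.sum_congr rfl
        intro t ht
        rw [Finset.mem_Icc] at ht
        have h' : ¬ (φ ω ≤ t - 1) := by omega
        simp only [hC, h', ↓reduceIte]
      rw [← e1, e2]
    have heq1 : ∑ t ∈ Finset.Icc n₀ T, C t ω = ∑ t ∈ Finset.Icc n₀ (φ ω), Bsel t ω := by
      have := heq (fun _ => 1)
      simpa using this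
    have heqz : ∑ t ∈ Finset.Icc n₀ T, C t ω * (Z t ω - μZ t)
        = ∑ t ∈ Finset.Icc n₀ (φ ω), Bsel t ω * (Z t ω - μZ t) := heq (fun t => Z t ω - μZ t)
    have hs' : (s : ℝ) ≤ ∑ t ∈ Finset.Icc n₀ T, C t ω := by
      rw [heq1]; exact hφs ω hφT
    rcases le_abs.mp habs with hpos | hneg
    · left
      refine ⟨hs', ?_⟩
      rw [one_mul, heq1, heqz]
      exact hpos
    · right
      refine ⟨hs', ?_⟩
      rw [heq1, heqz]
      linarith [hneg]
  refine le_trans (measure_mono hsub) ?_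
  refine le_trans (measure_union_le _ _) ?_
  have h1 := tail_le P hB n₀ T hT s hδ Z hZm hZb hindep C hC01 hCm 1 (Or.inl rfl)
  have h2 := tail_le P hB n₀ T hT s hδ Z hZm hZb hindep C hC01 hCm (-1) (Or.inr rfl)
  refine le_trans (add_le_add h1 h2) ?_
  rw [← ENNReal.ofReal_add (by positivity) (by positivity)]
  apply ENNReal.ofReal_le_ofReal
  rw [two_mul]
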